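/- Let 1 ≤ p < q < ∞ and d ≥ 1. Then the Morrey space M^p_q(ℝ^d) is not uniformly convex. (This follows since its James constant equals 2, so it is not uniformly non-square, and uniformly convex spaces are uniformly non-square.) -/

import Mathlib

open MeasureTheory Metric ENNReal

/-- The small Morrey norm: sup over centers `a` and radii `R ∈ (0,1)` of
`|B(a,R)|^(1/q-1/p) (∫_{B(a,R)} |f|^p)^(1/p)`, valued in `ℝ≥0∞`. -/
noncomputable def smallMorreyNorm (d : ℕ) (p q : ℝ)
    (f : EuclideanSpace ℝ (Fin d) → ℝ) : ℝ≥0∞ :=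
  ⨆ (a : EuclideanSpace ℝ (Fin d)) (R : ℝ) (_ : 0 < R) (_ : R < 1),
    volume (ball a R) ^ (1 / q - 1 / p) *
      (∫⁻ y in ball a R, ENNReal.ofReal (|f y| ^ p)) ^ (1 / p)

/-- The (classical) Morrey norm: sup over all centers `a` and radii `R > 0`. -/
noncomputable def morreyNorm (d : ℕ) (p q : ℝ)
    (f : EuclideanSpace ℝ (Fin d) → ℝ) : ℝ≥0∞ :=
  ⨆ (a : EuclideanSpace ℝ (Fin d)) (R : ℝ) (_ : 0 < R),
    volume (ball a R) ^ (1 / q - 1 / p) *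
      (∫⁻ y in ball a R, ENNReal.ofReal (|f y| ^ p)) ^ (1 / p)

/-- Single-ball bound: with `c = V1^(-1/q)`, any ball value with mass `M ≤ min(V R, V1)` is `≤ 1`. -/
lemma morrey_aux_single {d : ℕ} {p q : ℝ} (hp : 1 ≤ p) (hpq : p < q)
    {R : ℝ} (hR : 0 < R) {M : ℝ≥0∞}
    (hM1 : M ≤ volume (ball (0 : EuclideanSpace ℝ (Fin d)) R))
    (hM2 : M ≤ volume (ball (0 : EuclideanSpace ℝ (Fin d)) 1)) :
    volume (ball (0 : EuclideanSpace ℝ (Fin d)) R) ^ (1/q - 1/p) *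
      ((volume (ball (0 : EuclideanSpace ℝ (Fin d)) 1) ^ (-(1/q))) ^ p * M) ^ (1/p) ≤ 1 := by
  have hp0 : (0:ℝ) < p := lt_of_lt_of_le one_pos hp
  have hq0 : (0:ℝ) < q := lt_trans hp0 hpq
  set V1 := volume (ball (0 : EuclideanSpace ℝ (Fin d)) 1) with hV1def
  set VR := volume (ball (0 : EuclideanSpace ℝ (Fin d)) R) with hVRdef
  set c : ℝ≥0∞ := V1 ^ (-(1/q)) with hcdef
  have hV1pos : V1 ≠ 0 := (measure_ball_pos _ _ one_pos).ne'
  have hV1top : V1 ≠ ⊤ := measure_ball_lt_top.ne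
  have hVRpos : VR ≠ 0 := (measure_ball_pos _ _ hR).ne'
  have hVRtop : VR ≠ ⊤ := measure_ball_lt_top.ne
  have hcp : (c ^ p) ^ (1/p) = c := by
    rw [← ENNReal.rpow_mul, mul_one_div_cancel hp0.ne', ENNReal.rpow_one]
  rcases le_total R 1 with h | h
  · -- small radius: use M ≤ VR
    have hVle : VR ≤ V1 := measure_mono (ball_subset_ball h)
    calc VR ^ (1/q - 1/p) * (c ^ p * M) ^ (1/p)
        ≤ VR ^ (1/q - 1/p) * (c ^ p * VR) ^ (1/p) := by
          gcongr
      _ = VR ^ (1/q - 1/p) * (c * VR ^ (1/p)) := by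
          rw [ENNReal.mul_rpow_of_nonneg _ _ (one_div_nonneg.2 hp0.le), hcp]
      _ = c * VR ^ (1/q) := by
          rw [← mul_assoc, mul_comm (VR ^ (1/q - 1/p)) c, mul_assoc,
            ← ENNReal.rpow_add _ _ hVRpos hVRtop]
          ring_nf
      _ ≤ c * V1 ^ (1/q) := by
          gcongr
      _ = 1 := by
          rw [hcdef, ← ENNReal.rpow_add _ _ hV1pos hV1top, neg_add_cancel,
            ENNReal.rpow_zero]
  · -- large radius: use M ≤ V1
    have hVle : V1 ≤ VR := measure_mono (ball_subset_ball h)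
    calc VR ^ (1/q - 1/p) * (c ^ p * M) ^ (1/p)
        ≤ VR ^ (1/q - 1/p) * (c ^ p * V1) ^ (1/p) := by
          gcongr
      _ = VR ^ (1/q - 1/p) * (c * V1 ^ (1/p)) := by
          rw [ENNReal.mul_rpow_of_nonneg _ _ (one_div_nonneg.2 hp0.le), hcp]
      _ = VR ^ (1/q - 1/p) * V1 ^ (1/p - 1/q) := by
          rw [hcdef, ← ENNReal.rpow_add _ _ hV1pos hV1top]
          ring_nf
      _ ≤ V1 ^ (1/q - 1/p) * V1 ^ (1/p - 1/q) := by
          have h1 : VR ^ (1/q - 1/p) ≤ V1 ^ (1/q - 1/p) := by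
            have ht : (0:ℝ) ≤ 1/p - 1/q :=
              sub_nonneg.2 (le_of_lt (one_div_lt_one_div_of_lt hp0 hpq))
            have e1 : (1:ℝ)/q - 1/p = -(1/p - 1/q) := by ring
            rw [e1, ENNReal.rpow_neg, ENNReal.rpow_neg]
            exact ENNReal.inv_le_inv.2 (ENNReal.rpow_le_rpow hVle ht)
          gcongr
      _ = 1 := by
          rw [← ENNReal.rpow_add _ _ hV1pos hV1top]
          ring_nf
          exact ENNReal.rpow_zero

/-- Large-ball bound: once `R` exceeds the threshold, twice the unit-ball mass still gives `≤ 1`. -/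
lemma morrey_aux_double {d : ℕ} {p q : ℝ} (hp : 1 ≤ p) (hpq : p < q) (hd : 1 ≤ d)
    {R : ℝ} (hR : (2:ℝ) ^ (1/(p*(d:ℝ)*(1/p - 1/q))) ≤ R) :
    volume (ball (0 : EuclideanSpace ℝ (Fin d)) R) ^ (1/q - 1/p) *
      ((volume (ball (0 : EuclideanSpace ℝ (Fin d)) 1) ^ (-(1/q))) ^ p *
        (2 * volume (ball (0 : EuclideanSpace ℝ (Fin d)) 1))) ^ (1/p) ≤ 1 := by
  have hp0 : (0:ℝ) < p := lt_of_lt_of_le one_pos hp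
  have hq0 : (0:ℝ) < q := lt_trans hp0 hpq
  have ht : (0:ℝ) < 1/p - 1/q := sub_pos.2 (one_div_lt_one_div_of_lt hp0 hpq)
  have hd0 : (0:ℝ) < (d:ℝ) := by exact_mod_cast hd
  set t : ℝ := 1/p - 1/q with htdef
  have hR0pos : (0:ℝ) < (2:ℝ) ^ (1/(p*(d:ℝ)*t)) := Real.rpow_pos_of_pos two_pos _
  have hRpos : (0:ℝ) < R := lt_of_lt_of_le hR0pos hR
  set V1 := volume (ball (0 : EuclideanSpace ℝ (Fin d)) 1) with hV1def
  set c : ℝ≥0∞ := V1 ^ (-(1/q)) with hcdef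
  have hV1pos : V1 ≠ 0 := (measure_ball_pos _ _ one_pos).ne'
  have hV1top : V1 ≠ ⊤ := measure_ball_lt_top.ne
  have hcp : (c ^ p) ^ (1/p) = c := by
    rw [← ENNReal.rpow_mul, mul_one_div_cancel hp0.ne', ENNReal.rpow_one]
  have hVR : volume (ball (0 : EuclideanSpace ℝ (Fin d)) R)
      = ENNReal.ofReal (R ^ d) * V1 := by
    rw [Measure.addHaar_ball_of_pos _ _ hRpos, finrank_euclideanSpace_fin]
  have hW0 : ENNReal.ofReal (R ^ d) ≠ 0 := by
    simp [ENNReal.ofReal_eq_zero, not_le, pow_pos hRpos]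
  have hWtop : ENNReal.ofReal (R ^ d) ≠ ⊤ := ENNReal.ofReal_ne_top
  -- key numeric estimate
  have hkey : (2:ℝ≥0∞) ^ (1/p) ≤ ENNReal.ofReal (R ^ d) ^ t := by
    have h1 : ((2:ℝ) ^ (1/(p*(d:ℝ)*t))) ^ d = (2:ℝ) ^ ((1/(p*(d:ℝ)*t)) * (d:ℝ)) := by
      rw [← Real.rpow_natCast ((2:ℝ) ^ (1/(p*(d:ℝ)*t))) d, ← Real.rpow_mul (by norm_num)]
    have h2 : ((2:ℝ) ^ (1/(p*(d:ℝ)*t))) ^ d ≤ R ^ d :=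
      pow_le_pow_left₀ hR0pos.le hR d
    have h3 : ENNReal.ofReal (((2:ℝ) ^ (1/(p*(d:ℝ)*t))) ^ d) ^ t
        ≤ ENNReal.ofReal (R ^ d) ^ t :=
      ENNReal.rpow_le_rpow (ENNReal.ofReal_le_ofReal h2) ht.le
    refine le_trans (le_of_eq ?_) h3
    rw [h1, ← ENNReal.ofReal_rpow_of_pos two_pos, ENNReal.ofReal_ofNat,
      ← ENNReal.rpow_mul]
    congr 1
    field_simp
  -- compute the left side
  have hmain : volume (ball (0 : EuclideanSpace ℝ (Fin d)) R) ^ (1/q - 1/p) *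
      (c ^ p * (2 * V1)) ^ (1/p)
      = ENNReal.ofReal (R ^ d) ^ (-t) * (2:ℝ≥0∞) ^ (1/p) := by
    rw [hVR, ENNReal.mul_rpow_of_nonneg _ _ (one_div_nonneg.2 hp0.le), hcp,
      ENNReal.mul_rpow_of_nonneg _ _ (one_div_nonneg.2 hp0.le),
      ENNReal.mul_rpow_of_ne_top hWtop hV1top]
    have : ENNReal.ofReal (R ^ d) ^ (1/q - 1/p) = ENNReal.ofReal (R ^ d) ^ (-t) := by
      rw [htdef]; ring_nf
    rw [this]
    have hc1 : V1 ^ (1/q - 1/p) * (c * ((2:ℝ≥0∞) ^ (1/p) * V1 ^ (1/p))) = (2:ℝ≥0∞) ^ (1/p) := by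
      rw [hcdef]
      rw [show V1 ^ (1/q - 1/p) * (V1 ^ (-(1/q)) * ((2:ℝ≥0∞) ^ (1/p) * V1 ^ (1/p)))
          = (V1 ^ (1/q - 1/p) * V1 ^ (-(1/q)) * V1 ^ (1/p)) * (2:ℝ≥0∞) ^ (1/p) by ring]
      rw [← ENNReal.rpow_add _ _ hV1pos hV1top, ← ENNReal.rpow_add _ _ hV1pos hV1top,
        show 1/q - 1/p + -(1/q) + 1/p = 0 by ring, ENNReal.rpow_zero, one_mul]
    calc ENNReal.ofReal (R ^ d) ^ (-t) * V1 ^ (1/q - 1/p) *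
          (c * ((2:ℝ≥0∞) ^ (1/p) * V1 ^ (1/p)))
        = ENNReal.ofReal (R ^ d) ^ (-t) *
            (V1 ^ (1/q - 1/p) * (c * ((2:ℝ≥0∞) ^ (1/p) * V1 ^ (1/p)))) := by ring
      _ = ENNReal.ofReal (R ^ d) ^ (-t) * (2:ℝ≥0∞) ^ (1/p) := by rw [hc1]
  rw [hmain]
  have h2p0 : ((2:ℝ≥0∞) ^ (1/p)) ≠ 0 := by
    simp [ENNReal.rpow_eq_zero_iff]
  have h2pt : ((2:ℝ≥0∞) ^ (1/p)) ≠ ⊤ :=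
    (ENNReal.rpow_lt_top_of_nonneg (one_div_nonneg.2 hp0.le) (by norm_num)).ne
  calc ENNReal.ofReal (R ^ d) ^ (-t) * (2:ℝ≥0∞) ^ (1/p)
      ≤ ((2:ℝ≥0∞) ^ (1/p))⁻¹ * (2:ℝ≥0∞) ^ (1/p) := by
        gcongr
        rw [ENNReal.rpow_neg]
        exact ENNReal.inv_le_inv.2 hkey
    _ = 1 := ENNReal.inv_mul_cancel h2p0 h2pt

lemma morrey_aux_integral {d : ℕ} {p : ℝ} (hp0 : 0 < p)
    {S : Set (EuclideanSpace ℝ (Fin d))} (hS : MeasurableSet S)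
    {cr : ℝ} (hcr : 0 < cr) (T : Set (EuclideanSpace ℝ (Fin d))) :
    ∫⁻ y in T, ENNReal.ofReal (|S.indicator (fun _ => cr) y| ^ p)
      = ENNReal.ofReal cr ^ p * volume (S ∩ T) := by
  have h : ∀ y, ENNReal.ofReal (|S.indicator (fun _ => cr) y| ^ p)
      = S.indicator (fun _ => ENNReal.ofReal cr ^ p) y := by
    intro y
    by_cases hy : y ∈ S
    · rw [Set.indicator_of_mem hy, Set.indicator_of_mem hy, abs_of_pos hcr,
        ENNReal.ofReal_rpow_of_pos hcr]
    · rw [Set.indicator_of_notMem hy, Set.indicator_of_notMem hy, abs_zero,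
        Real.zero_rpow hp0.ne', ENNReal.ofReal_zero]
  simp_rw [h]
  rw [setLIntegral_indicator hS, setLIntegral_const]

lemma morrey_aux_one {d : ℕ} {p q : ℝ} (hp : 1 ≤ p) (hpq : p < q) :
    volume (ball (0 : EuclideanSpace ℝ (Fin d)) 1) ^ (1/q - 1/p) *
      ((volume (ball (0 : EuclideanSpace ℝ (Fin d)) 1) ^ (-(1/q))) ^ p *
        volume (ball (0 : EuclideanSpace ℝ (Fin d)) 1)) ^ (1/p) = 1 := by
  have hp0 : (0:ℝ) < p := lt_of_lt_of_le one_pos hp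
  set V1 := volume (ball (0 : EuclideanSpace ℝ (Fin d)) 1) with hV1def
  have hV1pos : V1 ≠ 0 := (measure_ball_pos _ _ one_pos).ne'
  have hV1top : V1 ≠ ⊤ := measure_ball_lt_top.ne
  have hcp : ((V1 ^ (-(1/q))) ^ p) ^ (1/p) = V1 ^ (-(1/q)) := by
    rw [← ENNReal.rpow_mul, mul_one_div_cancel hp0.ne', ENNReal.rpow_one]
  rw [ENNReal.mul_rpow_of_nonneg _ _ (one_div_nonneg.2 hp0.le), hcp,
    ← ENNReal.rpow_add _ _ hV1pos hV1top, ← ENNReal.rpow_add _ _ hV1pos hV1top,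
    show 1/q - 1/p + (-(1/q) + 1/p) = 0 by ring, ENNReal.rpow_zero]

/-- The Morrey norm of the normalized indicator of the unit ball is 1. -/
lemma morrey_aux_norm_u {d : ℕ} {p q : ℝ} (hp : 1 ≤ p) (hpq : p < q) :
    morreyNorm d p q ((ball (0 : EuclideanSpace ℝ (Fin d)) 1).indicator
      (fun _ => (volume (ball (0 : EuclideanSpace ℝ (Fin d)) 1) ^ (-(1/q))).toReal)) = 1 := by
  have hp0 : (0:ℝ) < p := lt_of_lt_of_le one_pos hp
  have hV1pos : volume (ball (0 : EuclideanSpace ℝ (Fin d)) 1) ≠ 0 :=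
    (measure_ball_pos _ _ one_pos).ne'
  have hV1top : volume (ball (0 : EuclideanSpace ℝ (Fin d)) 1) ≠ ⊤ := measure_ball_lt_top.ne
  have hc0 : volume (ball (0 : EuclideanSpace ℝ (Fin d)) 1) ^ (-(1/q)) ≠ 0 := by
    intro h
    rcases ENNReal.rpow_eq_zero_iff.1 h with ⟨h1, _⟩ | ⟨h1, _⟩
    exacts [hV1pos h1, hV1top h1]
  have hctop : volume (ball (0 : EuclideanSpace ℝ (Fin d)) 1) ^ (-(1/q)) ≠ ⊤ := by
    intro h
    rcases ENNReal.rpow_eq_top_iff.1 h with ⟨h1, _⟩ | ⟨h1, _⟩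
    exacts [hV1pos h1, hV1top h1]
  have hcr : 0 < (volume (ball (0 : EuclideanSpace ℝ (Fin d)) 1) ^ (-(1/q))).toReal :=
    ENNReal.toReal_pos hc0 hctop
  have hofr : ENNReal.ofReal (volume (ball (0 : EuclideanSpace ℝ (Fin d)) 1) ^ (-(1/q))).toReal
      = volume (ball (0 : EuclideanSpace ℝ (Fin d)) 1) ^ (-(1/q)) :=
    ENNReal.ofReal_toReal hctop
  apply le_antisymm
  · unfold morreyNorm
    refine iSup_le fun a => iSup_le fun R => iSup_le fun hR => ?_
    rw [morrey_aux_integral hp0 measurableSet_ball hcr, hofr,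
      Measure.addHaar_ball_center volume a R]
    refine morrey_aux_single hp hpq hR ?_ ?_
    · exact le_trans (measure_mono Set.inter_subset_right)
        (le_of_eq (Measure.addHaar_ball_center volume a R))
    · exact measure_mono Set.inter_subset_left
  · unfold morreyNorm
    refine le_iSup_of_le (0 : EuclideanSpace ℝ (Fin d))
      (le_iSup_of_le (1:ℝ) (le_iSup_of_le one_pos (le_of_eq ?_)))
    rw [morrey_aux_integral hp0 measurableSet_ball hcr, hofr, Set.inter_self]
    exact (morrey_aux_one hp hpq).symm

/-- The Morrey norm of the normalized indicator of the union of the unit ball and a far-away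
unit ball is still 1. -/
lemma morrey_aux_norm_f {d : ℕ} {p q : ℝ} (hp : 1 ≤ p) (hpq : p < q) (hd : 1 ≤ d)
    {x2 : EuclideanSpace ℝ (Fin d)}
    (hx2 : dist (0 : EuclideanSpace ℝ (Fin d)) x2
      = 2 * (2:ℝ) ^ (1/(p*(d:ℝ)*(1/p - 1/q))) + 2) :
    morreyNorm d p q ((ball (0 : EuclideanSpace ℝ (Fin d)) 1 ∪ ball x2 1).indicator
      (fun _ => (volume (ball (0 : EuclideanSpace ℝ (Fin d)) 1) ^ (-(1/q))).toReal)) = 1 := by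
  have hp0 : (0:ℝ) < p := lt_of_lt_of_le one_pos hp
  have hV1pos : volume (ball (0 : EuclideanSpace ℝ (Fin d)) 1) ≠ 0 :=
    (measure_ball_pos _ _ one_pos).ne'
  have hV1top : volume (ball (0 : EuclideanSpace ℝ (Fin d)) 1) ≠ ⊤ := measure_ball_lt_top.ne
  have hc0 : volume (ball (0 : EuclideanSpace ℝ (Fin d)) 1) ^ (-(1/q)) ≠ 0 := by
    intro h
    rcases ENNReal.rpow_eq_zero_iff.1 h with ⟨h1, _⟩ | ⟨h1, _⟩
    exacts [hV1pos h1, hV1top h1]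
  have hctop : volume (ball (0 : EuclideanSpace ℝ (Fin d)) 1) ^ (-(1/q)) ≠ ⊤ := by
    intro h
    rcases ENNReal.rpow_eq_top_iff.1 h with ⟨h1, _⟩ | ⟨h1, _⟩
    exacts [hV1pos h1, hV1top h1]
  have hcr : 0 < (volume (ball (0 : EuclideanSpace ℝ (Fin d)) 1) ^ (-(1/q))).toReal :=
    ENNReal.toReal_pos hc0 hctop
  have hofr : ENNReal.ofReal (volume (ball (0 : EuclideanSpace ℝ (Fin d)) 1) ^ (-(1/q))).toReal
      = volume (ball (0 : EuclideanSpace ℝ (Fin d)) 1) ^ (-(1/q)) :=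
    ENNReal.ofReal_toReal hctop
  have hSmeas : MeasurableSet (ball (0 : EuclideanSpace ℝ (Fin d)) 1 ∪ ball x2 1) :=
    measurableSet_ball.union measurableSet_ball
  have hR0pos : (0:ℝ) < (2:ℝ) ^ (1/(p*(d:ℝ)*(1/p - 1/q))) := Real.rpow_pos_of_pos two_pos _
  apply le_antisymm
  · unfold morreyNorm
    refine iSup_le fun a => iSup_le fun R => iSup_le fun hR => ?_
    rw [morrey_aux_integral hp0 hSmeas hcr, hofr, Measure.addHaar_ball_center volume a R]
    have hMT : volume ((ball (0 : EuclideanSpace ℝ (Fin d)) 1 ∪ ball x2 1) ∩ ball a R)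
        ≤ volume (ball (0 : EuclideanSpace ℝ (Fin d)) R) :=
      le_trans (measure_mono Set.inter_subset_right)
        (le_of_eq (Measure.addHaar_ball_center volume a R))
    have hsplit : volume ((ball (0 : EuclideanSpace ℝ (Fin d)) 1 ∪ ball x2 1) ∩ ball a R)
        ≤ volume (ball (0 : EuclideanSpace ℝ (Fin d)) 1 ∩ ball a R)
          + volume (ball x2 1 ∩ ball a R) := by
      rw [Set.union_inter_distrib_right]
      exact measure_union_le _ _
    by_cases h2 : ball x2 1 ∩ ball a R = ∅
    · have hM2 : volume ((ball (0 : EuclideanSpace ℝ (Fin d)) 1 ∪ ball x2 1) ∩ ball a R)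
          ≤ volume (ball (0 : EuclideanSpace ℝ (Fin d)) 1) := by
        refine le_trans ?_ (measure_mono (Set.inter_subset_left
          (s := ball (0 : EuclideanSpace ℝ (Fin d)) 1) (t := ball a R)))
        simpa [h2] using hsplit
      exact morrey_aux_single hp hpq hR hMT hM2
    by_cases h1 : ball (0 : EuclideanSpace ℝ (Fin d)) 1 ∩ ball a R = ∅
    · have hM2 : volume ((ball (0 : EuclideanSpace ℝ (Fin d)) 1 ∪ ball x2 1) ∩ ball a R)
          ≤ volume (ball (0 : EuclideanSpace ℝ (Fin d)) 1) := by
        have hB2 : volume (ball x2 1) = volume (ball (0 : EuclideanSpace ℝ (Fin d)) 1) :=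
          Measure.addHaar_ball_center volume x2 1
        calc volume ((ball (0 : EuclideanSpace ℝ (Fin d)) 1 ∪ ball x2 1) ∩ ball a R)
            ≤ volume (ball (0 : EuclideanSpace ℝ (Fin d)) 1 ∩ ball a R)
              + volume (ball x2 1 ∩ ball a R) := hsplit
          _ = volume (ball x2 1 ∩ ball a R) := by rw [h1]; simp
          _ ≤ volume (ball x2 1) := measure_mono Set.inter_subset_left
          _ = volume (ball (0 : EuclideanSpace ℝ (Fin d)) 1) := hB2
      exact morrey_aux_single hp hpq hR hMT hM2
    · -- both balls are hit: the radius must be large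
      obtain ⟨y1, hy1⟩ := Set.nonempty_iff_ne_empty.2 h1
      obtain ⟨y2, hy2⟩ := Set.nonempty_iff_ne_empty.2 h2
      have hy1B : dist y1 (0 : EuclideanSpace ℝ (Fin d)) < 1 := mem_ball.1 hy1.1
      have hy1T : dist y1 a < R := mem_ball.1 hy1.2
      have hy2B : dist y2 x2 < 1 := mem_ball.1 hy2.1
      have hy2T : dist y2 a < R := mem_ball.1 hy2.2
      have htri : dist (0 : EuclideanSpace ℝ (Fin d)) x2
          ≤ dist (0 : EuclideanSpace ℝ (Fin d)) y1 + dist y1 y2 + dist y2 x2 :=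
        dist_triangle4 _ _ _ _
      have htri2 : dist y1 y2 ≤ dist y1 a + dist a y2 := dist_triangle _ _ _
      rw [hx2] at htri
      rw [dist_comm y1 (0 : EuclideanSpace ℝ (Fin d))] at hy1B
      rw [dist_comm a y2] at htri2
      have hRlarge : (2:ℝ) ^ (1/(p*(d:ℝ)*(1/p - 1/q))) ≤ R := by linarith
      have hM2 : volume ((ball (0 : EuclideanSpace ℝ (Fin d)) 1 ∪ ball x2 1) ∩ ball a R)
          ≤ 2 * volume (ball (0 : EuclideanSpace ℝ (Fin d)) 1) := by
        have hB2 : volume (ball x2 1) = volume (ball (0 : EuclideanSpace ℝ (Fin d)) 1) :=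
          Measure.addHaar_ball_center volume x2 1
        calc volume ((ball (0 : EuclideanSpace ℝ (Fin d)) 1 ∪ ball x2 1) ∩ ball a R)
            ≤ volume (ball (0 : EuclideanSpace ℝ (Fin d)) 1 ∩ ball a R)
              + volume (ball x2 1 ∩ ball a R) := hsplit
          _ ≤ volume (ball (0 : EuclideanSpace ℝ (Fin d)) 1) + volume (ball x2 1) :=
              add_le_add (measure_mono Set.inter_subset_left)
                (measure_mono Set.inter_subset_left)
          _ = 2 * volume (ball (0 : EuclideanSpace ℝ (Fin d)) 1) := by rw [hB2, two_mul]
      calc volume (ball (0 : EuclideanSpace ℝ (Fin d)) R) ^ (1/q - 1/p) *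
            ((volume (ball (0 : EuclideanSpace ℝ (Fin d)) 1) ^ (-(1/q))) ^ p *
              volume ((ball (0 : EuclideanSpace ℝ (Fin d)) 1 ∪ ball x2 1) ∩ ball a R)) ^ (1/p)
          ≤ volume (ball (0 : EuclideanSpace ℝ (Fin d)) R) ^ (1/q - 1/p) *
            ((volume (ball (0 : EuclideanSpace ℝ (Fin d)) 1) ^ (-(1/q))) ^ p *
              (2 * volume (ball (0 : EuclideanSpace ℝ (Fin d)) 1))) ^ (1/p) := by
            gcongr
        _ ≤ 1 := morrey_aux_double hp hpq hd hRlarge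
  · unfold morreyNorm
    refine le_iSup_of_le (0 : EuclideanSpace ℝ (Fin d))
      (le_iSup_of_le (1:ℝ) (le_iSup_of_le one_pos (le_of_eq ?_)))
    rw [morrey_aux_integral hp0 hSmeas hcr, hofr,
      Set.inter_eq_self_of_subset_right Set.subset_union_left]
    exact (morrey_aux_one hp hpq).symm
/-- the Morrey space is not uniformly convex: it is not the case
that for every `ε > 0` there is `δ > 0` such that unit vectors `f, g` with
`‖f-g‖ ≥ ε` satisfy `‖(f+g)/2‖ ≤ 1 - δ`. -/
theorem morrey_not_uniformlyConvex (d : ℕ) (p q : ℝ) (hp : 1 ≤ p) (hpq : p < q)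
    (hd : 1 ≤ d) :
    ¬ ∀ ε : ℝ, 0 < ε → ∃ δ : ℝ, 0 < δ ∧
      ∀ f g : EuclideanSpace ℝ (Fin d) → ℝ,
        morreyNorm d p q f = 1 → morreyNorm d p q g = 1 →
          ENNReal.ofReal ε ≤ morreyNorm d p q (f - g) →
            morreyNorm d p q (fun x => (f x + g x) / 2) ≤ ENNReal.ofReal (1 - δ) := by
  intro H
  obtain ⟨δ, hδ, key⟩ := H 1 one_pos
  have hp0 : (0:ℝ) < p := lt_of_lt_of_le one_pos hp
  have hq0 : (0:ℝ) < q := lt_trans hp0 hpq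
  -- geometry: a far-away second center
  have hR0pos : (0:ℝ) < (2:ℝ) ^ (1/(p*(d:ℝ)*(1/p - 1/q))) := Real.rpow_pos_of_pos two_pos _
  set e : EuclideanSpace ℝ (Fin d) := EuclideanSpace.single (⟨0, hd⟩ : Fin d) (1:ℝ) with hedef
  have he : ‖e‖ = 1 := by rw [hedef, EuclideanSpace.norm_single]; norm_num
  set x2 : EuclideanSpace ℝ (Fin d) :=
    (2 * (2:ℝ) ^ (1/(p*(d:ℝ)*(1/p - 1/q))) + 2) • e with hx2def
  have hdist : dist (0 : EuclideanSpace ℝ (Fin d)) x2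
      = 2 * (2:ℝ) ^ (1/(p*(d:ℝ)*(1/p - 1/q))) + 2 := by
    rw [dist_comm, dist_zero_right, hx2def, norm_smul, he, mul_one, Real.norm_eq_abs,
      abs_of_pos (by linarith)]
  -- constants
  have hV1pos : volume (ball (0 : EuclideanSpace ℝ (Fin d)) 1) ≠ 0 :=
    (measure_ball_pos _ _ one_pos).ne'
  have hV1top : volume (ball (0 : EuclideanSpace ℝ (Fin d)) 1) ≠ ⊤ := measure_ball_lt_top.ne
  have hc0 : volume (ball (0 : EuclideanSpace ℝ (Fin d)) 1) ^ (-(1/q)) ≠ 0 := by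
    intro h
    rcases ENNReal.rpow_eq_zero_iff.1 h with ⟨h1, _⟩ | ⟨h1, _⟩
    exacts [hV1pos h1, hV1top h1]
  have hctop : volume (ball (0 : EuclideanSpace ℝ (Fin d)) 1) ^ (-(1/q)) ≠ ⊤ := by
    intro h
    rcases ENNReal.rpow_eq_top_iff.1 h with ⟨h1, _⟩ | ⟨h1, _⟩
    exacts [hV1pos h1, hV1top h1]
  set cr : ℝ := (volume (ball (0 : EuclideanSpace ℝ (Fin d)) 1) ^ (-(1/q))).toReal with hcrdef
  have hcr : 0 < cr := ENNReal.toReal_pos hc0 hctop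
  have hofr : ENNReal.ofReal cr = volume (ball (0 : EuclideanSpace ℝ (Fin d)) 1) ^ (-(1/q)) :=
    ENNReal.ofReal_toReal hctop
  set B1 := ball (0 : EuclideanSpace ℝ (Fin d)) 1 with hB1def
  set B2 := ball x2 1 with hB2def
  -- disjointness
  have hdisj : ∀ y, y ∈ B2 → y ∉ B1 := by
    intro y hy2 hy1
    rw [hB2def, mem_ball] at hy2
    rw [hB1def, mem_ball, dist_comm] at hy1
    have htri := dist_triangle (0 : EuclideanSpace ℝ (Fin d)) y x2
    rw [hdist] at htri
    have : dist y x2 ≥ 1 := by linarith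
    linarith
  -- the three functions
  set f : EuclideanSpace ℝ (Fin d) → ℝ := (B1 ∪ B2).indicator (fun _ => cr) with hfdef
  set g : EuclideanSpace ℝ (Fin d) → ℝ :=
    fun y => B1.indicator (fun _ => cr) y + B2.indicator (fun _ => -cr) y with hgdef
  set u : EuclideanSpace ℝ (Fin d) → ℝ := B1.indicator (fun _ => cr) with hudef
  have hnf : morreyNorm d p q f = 1 := by
    rw [hfdef, hB1def, hB2def, hcrdef]
    exact morrey_aux_norm_f hp hpq hd hdist
  have hnu : morreyNorm d p q u = 1 := by
    rw [hudef, hB1def, hcrdef]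
    exact morrey_aux_norm_u hp hpq
  -- |g| = |f| pointwise
  have habs : ∀ y, |g y| = |f y| := by
    intro y
    by_cases h1 : y ∈ B1
    · have h2 : y ∉ B2 := fun h => hdisj y h h1
      simp [hgdef, hudef, hfdef, Set.indicator_apply, Set.mem_union, h1, h2]
    · by_cases h2 : y ∈ B2
      · simp [hgdef, hudef, hfdef, Set.indicator_apply, Set.mem_union, h1, h2]
      · simp [hgdef, hudef, hfdef, Set.indicator_apply, Set.mem_union, h1, h2]
  have hng : morreyNorm d p q g = 1 := by
    rw [← hnf]
    unfold morreyNorm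
    simp_rw [habs]
  -- the midpoint is exactly u
  have hmid : (fun x => (f x + g x) / 2) = u := by
    funext y
    by_cases h1 : y ∈ B1
    · have h2 : y ∉ B2 := fun h => hdisj y h h1
      simp [hgdef, hudef, hfdef, Set.indicator_apply, Set.mem_union, h1, h2]
    · by_cases h2 : y ∈ B2
      · simp [hgdef, hudef, hfdef, Set.indicator_apply, Set.mem_union, h1, h2]
      · simp [hgdef, hudef, hfdef, Set.indicator_apply, Set.mem_union, h1, h2]
  -- the separation: ‖f - g‖ ≥ 1
  have hsep : ENNReal.ofReal 1 ≤ morreyNorm d p q (f - g) := by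
    rw [ENNReal.ofReal_one]
    unfold morreyNorm
    refine le_trans ?_ (le_iSup_of_le x2 (le_iSup_of_le (1:ℝ) (le_iSup_of_le one_pos le_rfl)))
    have hint : ∫⁻ y in ball x2 1, ENNReal.ofReal (|(f - g) y| ^ p)
        = ENNReal.ofReal (2 * cr) ^ p * volume (ball x2 1) := by
      rw [setLIntegral_congr_fun measurableSet_ball
        (fun ⦃y⦄ (hy : y ∈ ball x2 1) => ?_), setLIntegral_const]
      have h2 : y ∈ B2 := by rw [hB2def]; exact hy
      have h1 : y ∉ B1 := hdisj y h2
      have hval : (f - g) y = 2 * cr := by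
        simp [hfdef, hgdef, hudef, Set.indicator_apply, Set.mem_union, h1, h2]
        try ring
      rw [hval, abs_of_pos (by linarith : (0:ℝ) < 2 * cr),
        ENNReal.ofReal_rpow_of_pos (by linarith : (0:ℝ) < 2 * cr)]
    rw [hint]
    have hb : volume (ball x2 1) = volume (ball (0 : EuclideanSpace ℝ (Fin d)) 1) :=
      Measure.addHaar_ball_center volume x2 1
    have h2c : ENNReal.ofReal (2 * cr)
        = 2 * volume (ball (0 : EuclideanSpace ℝ (Fin d)) 1) ^ (-(1/q)) := by
      rw [ENNReal.ofReal_mul (by norm_num), ENNReal.ofReal_ofNat, hofr]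
    rw [hb, h2c, ENNReal.mul_rpow_of_nonneg _ _ hp0.le, mul_assoc,
      ENNReal.mul_rpow_of_nonneg _ _ (one_div_nonneg.2 hp0.le),
      ← ENNReal.rpow_mul, mul_one_div_cancel hp0.ne', ENNReal.rpow_one]
    rw [show volume (ball (0 : EuclideanSpace ℝ (Fin d)) 1) ^ (1/q - 1/p) *
        (2 * ((volume (ball (0 : EuclideanSpace ℝ (Fin d)) 1) ^ (-(1/q))) ^ p *
          volume (ball (0 : EuclideanSpace ℝ (Fin d)) 1)) ^ (1/p))
        = 2 * (volume (ball (0 : EuclideanSpace ℝ (Fin d)) 1) ^ (1/q - 1/p) *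
            ((volume (ball (0 : EuclideanSpace ℝ (Fin d)) 1) ^ (-(1/q))) ^ p *
              volume (ball (0 : EuclideanSpace ℝ (Fin d)) 1)) ^ (1/p)) by ring,
      morrey_aux_one hp hpq, mul_one]
    exact one_le_two
  have hfinal := key f g hnf hng hsep
  rw [hmid, hnu] at hfinal
  exact absurd hfinal (not_le.2 (ENNReal.ofReal_lt_one.2 (by linarith)))
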